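/- The function H(x) = (tanh(x + L/2) - tanh(x - L/2)) / (2 tanh(L/2)) satisfies H(0) ≥ H(x) for all real x; that is, H attains its maximum at x = 0. -/
import Mathlib


open Real

lemma tanh_key (a : ℝ) (ha : 0 < a) (x : ℝ) :
    Real.tanh (x + a) - Real.tanh (x - a) ≤ 2 * Real.tanh a := by
  have hsa : 0 < Real.sinh a := Real.sinh_pos_iff.2 ha
  have hca : 0 < Real.cosh a := Real.cosh_pos _
  have h1 : 0 < Real.cosh (x + a) := Real.cosh_pos _
  have h2 : 0 < Real.cosh (x - a) := Real.cosh_pos _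
  have hcx : 0 < Real.cosh x := Real.cosh_pos _
  have hid : Real.cosh x ^ 2 - Real.sinh x ^ 2 = 1 := Real.cosh_sq_sub_sinh_sq x
  have hida : Real.cosh a ^ 2 - Real.sinh a ^ 2 = 1 := Real.cosh_sq_sub_sinh_sq a
  rw [Real.tanh_eq_sinh_div_cosh, Real.tanh_eq_sinh_div_cosh, Real.tanh_eq_sinh_div_cosh,
    Real.sinh_add, Real.cosh_add, Real.sinh_sub, Real.cosh_sub] at *
  rw [div_sub_div _ _ (ne_of_gt h1) (ne_of_gt h2), div_le_iff₀ (by positivity)]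
  have hrw : 2 * (Real.sinh a / Real.cosh a) *
      ((Real.cosh x * Real.cosh a + Real.sinh x * Real.sinh a) *
        (Real.cosh x * Real.cosh a - Real.sinh x * Real.sinh a)) =
      2 * Real.sinh a *
      ((Real.cosh x * Real.cosh a + Real.sinh x * Real.sinh a) *
        (Real.cosh x * Real.cosh a - Real.sinh x * Real.sinh a)) / Real.cosh a := by
    ring
  rw [hrw, le_div_iff₀ hca]
  nlinarith [mul_nonneg (le_of_lt hsa) (sq_nonneg (Real.sinh x)), sq_nonneg (Real.cosh a), mul_pos hsa hca]

theorem habitat_max_at_zero (L : ℝ) (hL : 0 < L)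
    (H : ℝ → ℝ)
    (hH : ∀ x, H x = (Real.tanh (x + L/2) - Real.tanh (x - L/2)) / (2 * Real.tanh (L/2))) :
    ∀ x : ℝ, H x ≤ H 0 := by
  intro x
  have ha : 0 < L / 2 := by linarith
  have ht : 0 < Real.tanh (L/2) := by
    rw [Real.tanh_eq_sinh_div_cosh]
    exact div_pos (Real.sinh_pos_iff.2 ha) (Real.cosh_pos _)
  rw [hH x, hH 0, zero_add, zero_sub, Real.tanh_neg]
  have h0 : (Real.tanh (L/2) - -Real.tanh (L/2)) / (2 * Real.tanh (L/2)) = 1 := by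
    field_simp; ring
  rw [h0, div_le_one (by positivity)]
  exact tanh_key (L/2) ha x
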